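/- Let a > 0 with λ ≥ a. Then for all real numbers t > M ≥ λ², the set B^t := {f ∈ L : M ≤ ‖f‖² ≤ t} is finite and satisfies #B^t ≤ (2√t/a + 1)⁴ − (2√M/a − 1)⁴. -/

import Mathlib

open MeasureTheory Metric ENNReal

theorem stmt1 (L : Submodule ℤ (EuclideanSpace ℝ (Fin 4)))
    (hdisc : DiscreteTopology L)
    (hspan : Submodule.span ℝ (L : Set (EuclideanSpace ℝ (Fin 4))) = ⊤)
    (lam : ℝ)
    (hlam_mem : ∃ f ∈ L, f ≠ 0 ∧ ‖f‖ = lam)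
    (hlam_min : ∀ f ∈ L, f ≠ 0 → lam ≤ ‖f‖)
    (a : ℝ) (ha : 0 < a) (ha_lam : a ≤ lam)
    (M t : ℝ) (hM : lam ^ 2 ≤ M) (ht : M < t) :
    {f : EuclideanSpace ℝ (Fin 4) | f ∈ L ∧ M ≤ ‖f‖ ^ 2 ∧ ‖f‖ ^ 2 ≤ t}.Finite ∧
      ({f : EuclideanSpace ℝ (Fin 4) | f ∈ L ∧ M ≤ ‖f‖ ^ 2 ∧ ‖f‖ ^ 2 ≤ t}.ncard : ℝ) ≤
        (2 * Real.sqrt t / a + 1) ^ 4 - (2 * Real.sqrt M / a - 1) ^ 4 := by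
  set S := {f : EuclideanSpace ℝ (Fin 4) | f ∈ L ∧ M ≤ ‖f‖ ^ 2 ∧ ‖f‖ ^ 2 ≤ t} with hS
  -- basic positivity facts
  have hlam_pos : 0 < lam := lt_of_lt_of_le ha ha_lam
  have hM0 : 0 ≤ M := le_trans (by positivity) hM
  have ht0 : 0 ≤ t := le_of_lt (lt_of_le_of_lt hM0 ht)
  have hsM : lam ≤ Real.sqrt M := by
    rw [show lam = Real.sqrt (lam ^ 2) from (Real.sqrt_sq hlam_pos.le).symm]
    exact Real.sqrt_le_sqrt hM
  have hsM0 : 0 ≤ Real.sqrt M := Real.sqrt_nonneg M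
  have hst : Real.sqrt M ≤ Real.sqrt t := Real.sqrt_le_sqrt ht.le
  -- finiteness
  have hdisc' : DiscreteTopology (L : Set (EuclideanSpace ℝ (Fin 4))) := hdisc
  have hclosed : IsClosed (L : Set (EuclideanSpace ℝ (Fin 4))) := by
    have : DiscreteTopology L.toAddSubgroup := hdisc
    exact AddSubgroup.isClosed_of_discrete (H := L.toAddSubgroup)
  have hfin : S.Finite := by
    refine Set.Finite.subset
      (Metric.finite_isBounded_inter_isClosed (K := Metric.closedBall 0 (Real.sqrt t))
        (isDiscrete_iff_discreteTopology.mpr hdisc') Metric.isBounded_closedBall hclosed) ?_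
    rintro f ⟨hfL, -, hft⟩
    refine ⟨?_, hfL⟩
    simp only [Metric.mem_closedBall, dist_zero_right]
    rw [show ‖f‖ = Real.sqrt (‖f‖ ^ 2) from (Real.sqrt_sq (norm_nonneg f)).symm]
    exact Real.sqrt_le_sqrt hft
  refine ⟨hfin, ?_⟩
  -- packing argument
  set F := hfin.toFinset with hF
  set R : ℝ := Real.sqrt t + a / 2 with hR
  set r : ℝ := Real.sqrt M - a / 2 with hr
  have hr0 : 0 ≤ r := by
    have h2 : a / 2 ≤ Real.sqrt M := le_trans (by linarith) hsM
    rw [hr]; linarith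
  have hrR : r ≤ R := by
    simp only [hr, hR]; linarith
  -- disjointness of balls
  have hdisj : (F : Set (EuclideanSpace ℝ (Fin 4))).PairwiseDisjoint
      (fun f => Metric.ball f (a / 2)) := by
    intro f hf g hg hfg
    refine Metric.ball_disjoint_ball ?_
    have hfS : f ∈ S := by simpa [hF] using hf
    have hgS : g ∈ S := by simpa [hF] using hg
    have hsub : f - g ∈ L := L.sub_mem hfS.1 hgS.1
    have hne : f - g ≠ 0 := sub_ne_zero.mpr hfg
    have := hlam_min _ hsub hne
    rw [dist_eq_norm]
    linarith
  -- balls contained in annulus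
  have hsub : ∀ f ∈ F, Metric.ball f (a / 2) ⊆
      Metric.closedBall 0 R \ Metric.ball 0 r := by
    intro f hf x hx
    have hfS : f ∈ S := by simpa [hF] using hf
    have hfub : ‖f‖ ≤ Real.sqrt t := by
      rw [show ‖f‖ = Real.sqrt (‖f‖ ^ 2) from (Real.sqrt_sq (norm_nonneg f)).symm]
      exact Real.sqrt_le_sqrt hfS.2.2
    have hflb : Real.sqrt M ≤ ‖f‖ := by
      rw [show ‖f‖ = Real.sqrt (‖f‖ ^ 2) from (Real.sqrt_sq (norm_nonneg f)).symm]
      exact Real.sqrt_le_sqrt hfS.2.1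
    have hd : dist x f < a / 2 := Metric.mem_ball.mp hx
    constructor
    · simp only [Metric.mem_closedBall, dist_zero_right]
      calc ‖x‖ ≤ dist x f + ‖f‖ := by
            rw [dist_eq_norm]; simpa using norm_add_le (x - f) f
        _ ≤ R := by simp only [hR]; linarith
    · simp only [Metric.mem_ball, dist_zero_right, not_lt]
      have : ‖f‖ - ‖x‖ ≤ dist x f := by
        rw [dist_comm, dist_eq_norm]
        exact (abs_norm_sub_norm_le f x).trans' (le_abs_self _)
      simp only [hr]; linarith
  -- volume computation
  set c : ℝ≥0∞ := ENNReal.ofReal (Real.sqrt Real.pi ^ 4 / Real.Gamma (4 / 2 + 1)) with hc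
  have hball : ∀ x : EuclideanSpace ℝ (Fin 4), ∀ ρ : ℝ,
      volume (Metric.ball x ρ) = (ENNReal.ofReal ρ) ^ 4 * c := by
    intro x ρ
    rw [EuclideanSpace.volume_ball]
    norm_num [hc]
  have hcball : volume (Metric.closedBall (0 : EuclideanSpace ℝ (Fin 4)) R) =
      (ENNReal.ofReal R) ^ 4 * c := by
    rw [EuclideanSpace.volume_closedBall]
    norm_num [hc]
  have hUsub : (⋃ f ∈ F, Metric.ball f (a / 2)) ⊆
      Metric.closedBall (0 : EuclideanSpace ℝ (Fin 4)) R \ Metric.ball 0 r :=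
    Set.iUnion₂_subset hsub
  have h3 : volume (Metric.closedBall (0 : EuclideanSpace ℝ (Fin 4)) R \ Metric.ball 0 r)
      = (ENNReal.ofReal R) ^ 4 * c - (ENNReal.ofReal r) ^ 4 * c := by
    rw [measure_diff (Metric.ball_subset_closedBall.trans
        (Metric.closedBall_subset_closedBall hrR)) measurableSet_ball.nullMeasurableSet
        measure_ball_lt_top.ne, hcball, hball]
  have hvol : (F.card : ℝ≥0∞) * ((ENNReal.ofReal (a / 2)) ^ 4 * c) ≤
      (ENNReal.ofReal R) ^ 4 * c - (ENNReal.ofReal r) ^ 4 * c := by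
    calc (F.card : ℝ≥0∞) * ((ENNReal.ofReal (a / 2)) ^ 4 * c)
        = ∑ f ∈ F, volume (Metric.ball f (a / 2)) := by
          simp [hball, Finset.sum_const, mul_comm]
      _ = volume (⋃ f ∈ F, Metric.ball f (a / 2)) :=
          (measure_biUnion_finset hdisj fun f _ => measurableSet_ball).symm
      _ ≤ volume (Metric.closedBall 0 R \ Metric.ball 0 r) := measure_mono hUsub
      _ = _ := h3
  have hc_pos : 0 < Real.sqrt Real.pi ^ 4 / Real.Gamma (4 / 2 + 1) := by
    apply div_pos
    · have := Real.pi_pos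
      positivity
    · exact Real.Gamma_pos_of_pos (by norm_num)
  have etc : ∀ x : ℝ, 0 ≤ x → ((ENNReal.ofReal x) ^ 4 * c).toReal
      = x ^ 4 * (Real.sqrt Real.pi ^ 4 / Real.Gamma (4 / 2 + 1)) := by
    intro x hx
    rw [ENNReal.toReal_mul, ENNReal.toReal_pow, ENNReal.toReal_ofReal hx, hc,
      ENNReal.toReal_ofReal hc_pos.le]
  have hfinR : (ENNReal.ofReal R) ^ 4 * c ≠ ⊤ :=
    ENNReal.mul_ne_top (ENNReal.pow_ne_top ENNReal.ofReal_ne_top) ENNReal.ofReal_ne_top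
  have hsub_le : (ENNReal.ofReal r) ^ 4 * c ≤ (ENNReal.ofReal R) ^ 4 * c := by
    gcongr <;> exact ENNReal.ofReal_le_ofReal hrR
  have hreal : (F.card : ℝ) * ((a / 2) ^ 4 * (Real.sqrt Real.pi ^ 4 / Real.Gamma (4 / 2 + 1)))
      ≤ R ^ 4 * (Real.sqrt Real.pi ^ 4 / Real.Gamma (4 / 2 + 1))
        - r ^ 4 * (Real.sqrt Real.pi ^ 4 / Real.Gamma (4 / 2 + 1)) := by
    have h := ENNReal.toReal_mono (ENNReal.sub_ne_top hfinR) hvol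
    rw [ENNReal.toReal_sub_of_le hsub_le hfinR, ENNReal.toReal_mul,
      etc _ (by positivity), etc _ (le_trans hr0 hrR), etc _ hr0] at h
    simpa using h
  -- simplify the constant
  have hkey : (F.card : ℝ) * (a / 2) ^ 4 ≤ R ^ 4 - r ^ 4 := by
    have h := hreal
    set C := Real.sqrt Real.pi ^ 4 / Real.Gamma (4 / 2 + 1)
    rw [show (F.card : ℝ) * ((a / 2) ^ 4 * C) = ((F.card : ℝ) * (a / 2) ^ 4) * C by ring,
        show R ^ 4 * C - r ^ 4 * C = (R ^ 4 - r ^ 4) * C by ring] at h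
    exact le_of_mul_le_mul_right h hc_pos
  -- final algebra
  have hcard : (S.ncard : ℝ) = (F.card : ℝ) := by
    rw [Set.ncard_eq_toFinset_card S hfin]
  rw [hcard]
  have ha2 : (0 : ℝ) < (a / 2) ^ 4 := by positivity
  rw [← le_div_iff₀ ha2] at hkey
  refine hkey.trans (le_of_eq ?_)
  have haa : a ≠ 0 := ha.ne'
  rw [hR, hr]
  field_simp
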